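/- arXiv:math/0006224 — 4 statements merged into one kernel-verified Lean document; each statement's English description precedes it below -/
import Mathlib

section
/- Let T be a contraction with 1 − TT* of finite rank. Then lim_{n→∞} tr(1 − Tⁿ(T*)ⁿ)/n exists and equals lim_{n→∞} tr((T*)ⁿ Tⁿ (1 − TT*)). -/
open Filter Topology ContinuousLinearMap
open scoped InnerProductSpace

private lemma trace_rankOneSum {H : Type*} [NormedAddCommGroup H] [InnerProductSpace ℂ H]
    [CompleteSpace H] {ι κ : Type*} [Fintype κ] (b : HilbertBasis ι ℂ H) (M : H →L[ℂ] H)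
    (μ : κ → ℂ) (x y : κ → H)
    (hM : ∀ v, M v = ∑ r, μ r • (⟪y r, v⟫_ℂ • x r)) :
    ∑' i, ⟪b i, M (b i)⟫_ℂ = ∑ r, μ r * ⟪y r, x r⟫_ℂ := by
  have h : ∀ i, ⟪b i, M (b i)⟫_ℂ = ∑ r, μ r * (⟪y r, b i⟫_ℂ * ⟪b i, x r⟫_ℂ) := by
    intro i
    rw [hM, inner_sum]
    refine Finset.sum_congr rfl fun r _ => ?_
    rw [inner_smul_right, inner_smul_right]
  have hs : HasSum (fun i => ∑ r, μ r * (⟪y r, b i⟫_ℂ * ⟪b i, x r⟫_ℂ))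
      (∑ r, μ r * ⟪y r, x r⟫_ℂ) :=
    hasSum_sum fun r _ => (b.hasSum_inner_mul_inner (y r) (x r)).mul_left (μ r)
  have hs' : HasSum (fun i => ⟪b i, M (b i)⟫_ℂ) (∑ r, μ r * ⟪y r, x r⟫_ℂ) := by
    simpa only [← h] using hs
  exact hs'.tsum_eq

theorem arveson_formula_eq_defect_trace_limit {H : Type*} [NormedAddCommGroup H]
    [InnerProductSpace ℂ H] [CompleteSpace H]
    {ι : Type*} (b : HilbertBasis ι ℂ H)
    (T : H →L[ℂ] H) (hT : ‖T‖ ≤ 1)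
    (hfin : FiniteDimensional ℂ
      (LinearMap.range (((1 : H →L[ℂ] H) - T * adjoint T : H →L[ℂ] H) : H →ₗ[ℂ] H)))
    (a c : ℕ → ℝ)
    (ha : ∀ n : ℕ, (a n : ℂ) =
      ∑' i : ι, ⟪b i, ((adjoint T) ^ n * T ^ n * ((1 : H →L[ℂ] H) - T * adjoint T)) (b i)⟫_ℂ)
    (hc : ∀ n : ℕ, (c n : ℂ) =
      ∑' i : ι, ⟪b i, ((1 : H →L[ℂ] H) - T ^ n * (adjoint T) ^ n) (b i)⟫_ℂ) :
    ∃ L : ℝ, Tendsto (fun n : ℕ => c n / n) atTop (𝓝 L) ∧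
      Tendsto a atTop (𝓝 L) := by
  classical
  set D : H →L[ℂ] H := (1 : H →L[ℂ] H) - T * adjoint T with hD
  have hadj : adjoint D = D := by
    rw [← star_eq_adjoint, hD]
    simp [star_sub, star_mul, star_eq_adjoint, adjoint_adjoint]
  have hsym : ∀ u v : H, ⟪D u, v⟫_ℂ = ⟪u, D v⟫_ℂ := by
    intro u v
    conv_lhs => rw [← hadj]
    exact adjoint_inner_left D v u
  haveI : FiniteDimensional ℂ ↥(LinearMap.range (D : H →ₗ[ℂ] H)) := hfin
  set S : ↥(LinearMap.range (D : H →ₗ[ℂ] H)) →ₗ[ℂ] ↥(LinearMap.range (D : H →ₗ[ℂ] H)) :=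
    (D : H →ₗ[ℂ] H).restrict (fun x _ => LinearMap.mem_range_self _ x) with hSdef
  have hS : S.IsSymmetric := by
    intro u v
    have := hsym (u : H) (v : H)
    simpa [hSdef, LinearMap.restrict_apply, Submodule.coe_inner] using this
  have hm : Module.finrank ℂ ↥(LinearMap.range (D : H →ₗ[ℂ] H))
      = Module.finrank ℂ ↥(LinearMap.range (D : H →ₗ[ℂ] H)) := rfl
  set m := Module.finrank ℂ ↥(LinearMap.range (D : H →ₗ[ℂ] H))
  set eb := hS.eigenvectorBasis hm with heb
  set lam := hS.eigenvalues hm with hlamdef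
  set e : Fin m → H := fun j => (eb j : H) with hedef
  have horm : ∀ j, ‖e j‖ = 1 := by
    intro j
    exact eb.orthonormal.1 j
  have hDe : ∀ j, D (e j) = (lam j : ℂ) • e j := by
    intro j
    have h := hS.apply_eigenvectorBasis hm j
    calc D (e j) = ((S (eb j) : ↥(LinearMap.range (D : H →ₗ[ℂ] H))) : H) := rfl
      _ = (((lam j : ℂ) • eb j : ↥(LinearMap.range (D : H →ₗ[ℂ] H))) : H) := by rw [h]; rfl
      _ = (lam j : ℂ) • e j := rfl
  have hDex : ∀ v : H, D v = ∑ j, (lam j : ℂ) • (⟪e j, v⟫_ℂ • e j) := by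
    intro v
    set w : ↥(LinearMap.range (D : H →ₗ[ℂ] H)) := ⟨D v, LinearMap.mem_range_self _ v⟩ with hw
    have hrepr := eb.sum_repr w
    have h1 : D v = ∑ j, ⟪e j, D v⟫_ℂ • e j := by
      have := congrArg (Subtype.val) hrepr.symm
      simpa [eb.repr_apply_apply, Submodule.coe_inner, hedef, hw] using this
    rw [h1]
    refine Finset.sum_congr rfl fun j _ => ?_
    have : ⟪e j, D v⟫_ℂ = (lam j : ℂ) * ⟪e j, v⟫_ℂ := by
      rw [← hsym, hDe j, inner_smul_left, Complex.conj_ofReal]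
    rw [this, smul_smul]
  have hlam0 : ∀ j, 0 ≤ lam j := by
    intro j
    have h2 : ⟪e j, D (e j)⟫_ℂ = (lam j : ℂ) := by
      rw [hDe j, inner_smul_right, inner_self_eq_norm_sq_to_K, horm j]
      norm_num
    have h3 : ⟪e j, D (e j)⟫_ℂ = ((1 : ℝ) : ℂ) - ((‖adjoint T (e j)‖ ^ 2 : ℝ) : ℂ) := by
      rw [hD]
      simp only [ContinuousLinearMap.sub_apply, ContinuousLinearMap.one_apply,
        ContinuousLinearMap.mul_apply, inner_sub_right]
      rw [← adjoint_inner_left T, inner_self_eq_norm_sq_to_K, inner_self_eq_norm_sq_to_K,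
        horm j]
      norm_num
    have h4 : lam j = 1 - ‖adjoint T (e j)‖ ^ 2 := by
      have := h2.symm.trans h3
      exact_mod_cast this
    have h5 : ‖adjoint T (e j)‖ ≤ 1 := by
      calc ‖adjoint T (e j)‖ ≤ ‖adjoint T‖ * ‖e j‖ := le_opNorm _ _
        _ = ‖T‖ := by rw [horm j, mul_one]; exact LinearIsometryEquiv.norm_map adjoint T
        _ ≤ 1 := hT
    rw [h4]
    nlinarith [norm_nonneg (adjoint T (e j))]
  set g : ℕ → ℝ := fun n => ∑ j, lam j * ‖(T ^ n) (e j)‖ ^ 2 with hg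
  have hpow : ∀ n : ℕ, (adjoint T) ^ n = adjoint (T ^ n) := by
    intro n
    rw [← star_eq_adjoint, ← star_eq_adjoint, star_pow]
  -- Claim A : a n = g n
  have hag : ∀ n, a n = g n := by
    intro n
    have hMv : ∀ v, ((adjoint T) ^ n * T ^ n * D) v
        = ∑ j, (lam j : ℂ) • (⟪e j, v⟫_ℂ • ((adjoint T) ^ n * T ^ n) (e j)) := by
      intro v
      rw [ContinuousLinearMap.mul_apply, hDex v, map_sum]
      refine Finset.sum_congr rfl fun j _ => ?_
      rw [map_smul, map_smul]
    have htr := trace_rankOneSum b _ (fun j => (lam j : ℂ))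
      (fun j => ((adjoint T) ^ n * T ^ n) (e j)) e hMv
    have key : (a n : ℂ) = (g n : ℂ) := by
      rw [ha n, htr]
      have : ∀ j : Fin m, ⟪e j, ((adjoint T) ^ n * T ^ n) (e j)⟫_ℂ
          = ((‖(T ^ n) (e j)‖ ^ 2 : ℝ) : ℂ) := by
        intro j
        rw [ContinuousLinearMap.mul_apply, hpow n, adjoint_inner_right,
          inner_self_eq_norm_sq_to_K]
        norm_cast
      simp only [this, hg]
      push_cast
      rfl
    exact_mod_cast key
  -- operator identity
  have hop : ∀ n : ℕ, (1 : H →L[ℂ] H) - T ^ n * (adjoint T) ^ n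
      = ∑ k ∈ Finset.range n, T ^ k * D * (adjoint T) ^ k := by
    intro n
    induction n with
    | zero => simp
    | succ n ih =>
      rw [Finset.sum_range_succ, ← ih]
      have hstep : T ^ n * D * (adjoint T) ^ n
          = T ^ n * (adjoint T) ^ n - T ^ (n + 1) * (adjoint T) ^ (n + 1) := by
        rw [hD, mul_sub, sub_mul, mul_one, pow_succ T n, pow_succ' (adjoint T) n]
        simp [mul_assoc]
      rw [hstep]
      abel
  -- Claim B : c n = ∑_{k<n} g k
  have hcg : ∀ n, c n = ∑ k ∈ Finset.range n, g k := by
    intro n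
    have hMv : ∀ v, ((1 : H →L[ℂ] H) - T ^ n * (adjoint T) ^ n) v
        = ∑ r : Fin n × Fin m,
            (lam r.2 : ℂ) • (⟪(T ^ (r.1 : ℕ)) (e r.2), v⟫_ℂ • (T ^ (r.1 : ℕ)) (e r.2)) := by
      intro v
      rw [hop n, ContinuousLinearMap.sum_apply, Fintype.sum_prod_type,
        ← Fin.sum_univ_eq_sum_range
          (fun k => (T ^ k * D * (adjoint T) ^ k) v) n]
      refine Finset.sum_congr rfl fun k _ => ?_
      rw [ContinuousLinearMap.mul_apply, ContinuousLinearMap.mul_apply,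
        hDex ((adjoint T ^ (k : ℕ)) v), map_sum]
      refine Finset.sum_congr rfl fun j _ => ?_
      rw [map_smul, map_smul]
      congr 2
      rw [hpow, adjoint_inner_right]
    have htr := trace_rankOneSum b _ (fun r : Fin n × Fin m => (lam r.2 : ℂ))
      (fun r : Fin n × Fin m => (T ^ (r.1 : ℕ)) (e r.2))
      (fun r : Fin n × Fin m => (T ^ (r.1 : ℕ)) (e r.2)) hMv
    have key : (c n : ℂ) = ((∑ k ∈ Finset.range n, g k : ℝ) : ℂ) := by
      rw [hc n, htr]
      simp only [inner_self_eq_norm_sq_to_K, hg]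
      push_cast
      rw [Fintype.sum_prod_type, ← Fin.sum_univ_eq_sum_range
        (fun k => ∑ j : Fin m, (lam j : ℂ) * (‖(⇑T)^[k] (e j)‖ : ℂ) ^ 2) n]
      rfl
    exact_mod_cast key
  -- g is antitone and nonneg
  have hgnn : ∀ n, 0 ≤ g n := by
    intro n
    refine Finset.sum_nonneg fun j _ => ?_
    exact mul_nonneg (hlam0 j) (sq_nonneg _)
  have hganti : Antitone g := by
    refine antitone_nat_of_succ_le fun n => ?_
    refine Finset.sum_le_sum fun j _ => ?_
    have hnorm : ‖(T ^ (n + 1)) (e j)‖ ≤ ‖(T ^ n) (e j)‖ := by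
      rw [pow_succ' T n, ContinuousLinearMap.mul_apply]
      calc ‖T ((T ^ n) (e j))‖ ≤ ‖T‖ * ‖(T ^ n) (e j)‖ := le_opNorm _ _
        _ ≤ 1 * ‖(T ^ n) (e j)‖ := by
            exact mul_le_mul_of_nonneg_right hT (norm_nonneg _)
        _ = ‖(T ^ n) (e j)‖ := one_mul _
    have := mul_le_mul_of_nonneg_left
      (pow_le_pow_left₀ (norm_nonneg _) hnorm 2) (hlam0 j)
    exact this
  set L : ℝ := ⨅ n, g n with hL
  have hgL : Tendsto g atTop (𝓝 L) := by
    refine tendsto_atTop_ciInf hganti ⟨0, ?_⟩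
    rintro x ⟨n, rfl⟩
    exact hgnn n
  refine ⟨L, ?_, ?_⟩
  · have hces := hgL.cesaro
    have : (fun n : ℕ => c n / n) = fun n : ℕ => ((n : ℝ))⁻¹ * ∑ k ∈ Finset.range n, g k := by
      funext n
      rw [hcg n, div_eq_inv_mul]
    rw [this]
    exact hces
  · have : a = g := funext hag
    rw [this]
    exact hgL
end

section
/- With T a contraction and Q = [[T, √(1−TT*)],[0,0]] on H ⊕ range(1−TT*), one has rank(1 − Q*Q) = rank(1 − T*T). -/
set_option synthInstance.maxHeartbeats 1000000
set_option maxHeartbeats 1000000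

open ContinuousLinearMap

theorem Q_aux {H : Type*} [NormedAddCommGroup H]
    [InnerProductSpace ℂ H] [CompleteSpace H]
    (T Δ : H →L[ℂ] H) (K : Submodule ℂ H) [CompleteSpace K]
    (hΔadj : adjoint Δ = Δ)
    (hΔsq' : ∀ v : H, Δ (Δ v) = v - T (adjoint T v))
    (hrange : ∀ v : H, v - T (adjoint T v) ∈ K)
    (hKinj : ∀ v : H, v ∈ K → Δ v = 0 → v = 0)
    (Q : WithLp 2 (H × K) →L[ℂ] WithLp 2 (H × K))
    (hQ : ∀ x, WithLp.equiv 2 _ (Q x) =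
      (T ((WithLp.equiv 2 _) x).1 + Δ (((WithLp.equiv 2 _) x).2 : H), 0)) :
    Module.rank ℂ (LinearMap.range (1 - adjoint Q * Q).toLinearMap) =
      Module.rank ℂ (LinearMap.range ((1 : H →L[ℂ] H) - adjoint T * T).toLinearMap) := by
  classical
  -- Δ vanishes on Kᗮ
  have hΔperp : ∀ v : H, v ∈ Kᗮ → Δ v = 0 := by
    intro v hv
    have h0 : (inner ℂ v (v - T (adjoint T v)) : ℂ) = 0 :=
      (Submodule.mem_orthogonal' K v).mp hv _ (hrange v)
    have h2 := ContinuousLinearMap.adjoint_inner_left Δ (Δ v) v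
    rw [hΔadj, hΔsq'] at h2
    exact inner_self_eq_zero.mp (h2.trans h0)
  have hQ' : ∀ x : WithLp 2 (H × K), Q x = (WithLp.equiv 2 (H × K)).symm
      (T ((WithLp.equiv 2 (H × K)) x).1 + Δ (((WithLp.equiv 2 (H × K)) x).2 : H), 0) := by
    intro x
    have h := congrArg (WithLp.equiv 2 (H × K)).symm (hQ x)
    simpa using h
  -- the adjoint of Q on vectors of the form (w, 0)
  have hQstar : ∀ w : H, adjoint Q ((WithLp.equiv 2 (H × K)).symm (w, 0)) =
      (WithLp.equiv 2 (H × K)).symm (adjoint T w, K.orthogonalProjectionOnto (Δ w)) := by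
    intro w
    apply ext_inner_right ℂ
    intro v
    rw [ContinuousLinearMap.adjoint_inner_left, hQ' v]
    rw [WithLp.prod_inner_apply, WithLp.prod_inner_apply]
    have hp : (inner ℂ ((K.orthogonalProjectionOnto (Δ w) : H)) ((v.snd : H)) : ℂ)
        = inner ℂ (Δ w) ((v.snd : H)) := by
      have hm := Submodule.sub_starProjection_mem_orthogonal (K := K) (Δ w)
      have h0 : (inner ℂ (Δ w - (K.orthogonalProjectionOnto (Δ w) : H)) ((v.snd : H)) : ℂ) = 0 :=
        (Submodule.mem_orthogonal' K _).mp hm _ (v.snd).2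
      rw [inner_sub_left] at h0
      exact (sub_eq_zero.mp h0).symm
    have hTw : (inner ℂ (adjoint T w) (v.fst) : ℂ) = inner ℂ w (T v.fst) :=
      ContinuousLinearMap.adjoint_inner_left T v.fst w
    have hDw : (inner ℂ (Δ w) ((v.snd : H)) : ℂ) = inner ℂ w (Δ (v.snd : H)) := by
      conv_lhs => rw [← hΔadj]
      exact ContinuousLinearMap.adjoint_inner_left Δ _ w
    simp only [WithLp.equiv_symm_apply, WithLp.equiv_apply, WithLp.ofLp_toLp, WithLp.toLp_fst, WithLp.toLp_snd, WithLp.ofLp_fst, WithLp.ofLp_snd,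
      Submodule.coe_inner, inner_zero_left, add_zero, inner_add_right, hp, hTw, hDw]
  -- Q Q* = identity on vectors (w,0)
  have hQQstar : ∀ w : H, Q (adjoint Q ((WithLp.equiv 2 (H × K)).symm (w, 0))) =
      (WithLp.equiv 2 (H × K)).symm (w, 0) := by
    intro w
    rw [hQstar w, hQ']
    have hP : Δ ((K.orthogonalProjectionOnto (Δ w) : K) : H) = Δ (Δ w) := by
      have hm := Submodule.sub_starProjection_mem_orthogonal (K := K) (Δ w)
      have h0 := hΔperp _ hm
      rw [map_sub, sub_eq_zero] at h0
      exact h0.symm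
    congr 1
    refine Prod.ext ?_ rfl
    show T (((WithLp.equiv 2 (H × K)) ((WithLp.equiv 2 (H × K)).symm
        (adjoint T w, K.orthogonalProjectionOnto (Δ w)))).1) + _ = w
    simp only [Equiv.apply_symm_apply]
    rw [hP, hΔsq']
    abel
  -- range of (1 - Q* Q) consists of kernel vectors of Q
  have hQA : ∀ x : WithLp 2 (H × K), Q ((1 - adjoint Q * Q) x) = 0 := by
    intro x
    have hx : (1 - adjoint Q * Q) x = x - adjoint Q (Q x) := by
      simp [ContinuousLinearMap.mul_apply, ContinuousLinearMap.sub_apply]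
    rw [hx, map_sub, hQ' x, hQQstar, sub_self]
  have hkerQ : ∀ v : WithLp 2 (H × K), Q v = 0 →
      T ((WithLp.equiv 2 (H × K)) v).1 + Δ (((WithLp.equiv 2 (H × K)) v).2 : H) = 0 := by
    intro v hv
    have h := hQ v
    rw [hv] at h
    have h1 := congrArg Prod.fst h
    simpa using h1.symm
  -- the injection from range (1 - Q*Q) to range (1 - T*T)
  let g : ↥(LinearMap.range (1 - adjoint Q * Q).toLinearMap) →ₗ[ℂ]
      ↥(LinearMap.range ((1 : H →L[ℂ] H) - adjoint T * T).toLinearMap) :=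
    { toFun := fun v => ⟨((1 : H →L[ℂ] H) - adjoint T * T)
        (((WithLp.equiv 2 (H × K)) (v : WithLp 2 (H × K))).1), LinearMap.mem_range_self _ _⟩
      map_add' := by
        intro a b
        ext
        exact map_add ((1 : H →L[ℂ] H) - adjoint T * T) _ _
      map_smul' := by
        intro c a
        ext
        exact map_smul ((1 : H →L[ℂ] H) - adjoint T * T) c _ }
  have hginj : Function.Injective g := by
    rw [injective_iff_map_eq_zero]
    rintro ⟨v, hv⟩ h0
    have hB0 : ((1 : H →L[ℂ] H) - adjoint T * T) (((WithLp.equiv 2 (H × K)) v).1) = 0 := by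
      have h1 := congrArg Subtype.val h0
      exact h1
    obtain ⟨x, hx⟩ := hv
    have hQv : Q v = 0 := by rw [← hx]; exact hQA x
    have hker := hkerQ v hQv
    set v1 := ((WithLp.equiv 2 (H × K)) v).1 with hv1d
    set v2 := ((WithLp.equiv 2 (H × K)) v).2 with hv2d
    have hfix : adjoint T (T v1) = v1 := by
      have h2 : v1 - adjoint T (T v1) = 0 := by
        simpa [ContinuousLinearMap.mul_apply, ContinuousLinearMap.sub_apply] using hB0
      exact (sub_eq_zero.mp h2).symm
    have hTv : T v1 = -Δ (v2 : H) := eq_neg_of_add_eq_zero_left hker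
    have hDv : Δ ((v2 : K) : H) = -(T v1) := by rw [hTv, neg_neg]
    have n2 : adjoint T (Δ ((v2 : K) : H)) = -v1 := by rw [hDv, map_neg, hfix]
    have hu2 : Δ (Δ (Δ ((v2 : K) : H))) = 0 := by
      rw [hΔsq' (Δ ((v2 : K) : H)), n2, map_neg, sub_neg_eq_add, add_comm]
      exact hker
    have hu1 : Δ (Δ ((v2 : K) : H)) = 0 := by
      have h := ContinuousLinearMap.adjoint_inner_left Δ (Δ ((v2 : K) : H))
        (Δ (Δ ((v2 : K) : H)))
      rw [hΔadj, hu2, inner_zero_left] at h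
      exact inner_self_eq_zero.mp h.symm
    have hu0 : Δ ((v2 : K) : H) = 0 := by
      have h := ContinuousLinearMap.adjoint_inner_left Δ ((v2 : K) : H)
        (Δ ((v2 : K) : H))
      rw [hΔadj, hu1, inner_zero_left] at h
      exact inner_self_eq_zero.mp h.symm
    have hT0 : T v1 = 0 := by rw [hTv, hu0, neg_zero]
    have hv10 : v1 = 0 := by rw [← hfix, hT0, map_zero]
    have hv20 : ((v2 : K) : H) = 0 := hKinj _ (v2 : K).2 hu0
    apply Subtype.ext
    show v = 0
    have hv0 : (WithLp.equiv 2 (H × K)) v = (0 : H × K) :=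
      Prod.ext (by simpa [hv1d] using hv10) (Subtype.ext (by simpa [hv2d] using hv20))
    calc v = (WithLp.equiv 2 (H × K)).symm ((WithLp.equiv 2 (H × K)) v) :=
          (Equiv.symm_apply_apply _ _).symm
      _ = 0 := by rw [hv0]; simp
  have hle : Module.rank ℂ ↥(LinearMap.range (1 - adjoint Q * Q).toLinearMap) ≤
      Module.rank ℂ ↥(LinearMap.range ((1 : H →L[ℂ] H) - adjoint T * T).toLinearMap) :=
    LinearMap.rank_le_of_injective g hginj
  -- the reverse inequality
  have hge : Module.rank ℂ ↥(LinearMap.range ((1 : H →L[ℂ] H) - adjoint T * T).toLinearMap) ≤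
      Module.rank ℂ ↥(LinearMap.range (1 - adjoint Q * Q).toLinearMap) := by
    let Jl : H →ₗ[ℂ] WithLp 2 (H × K) :=
      ((WithLp.linearEquiv 2 ℂ (H × K)).symm.toLinearMap).comp (LinearMap.inl ℂ H K)
    let pl : WithLp 2 (H × K) →ₗ[ℂ] H :=
      (LinearMap.fst ℂ H K).comp (WithLp.linearEquiv 2 ℂ (H × K)).toLinearMap
    let Al : WithLp 2 (H × K) →ₗ[ℂ] WithLp 2 (H × K) :=
      ((1 - adjoint Q * Q : WithLp 2 (H × K) →L[ℂ] WithLp 2 (H × K)) :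
        WithLp 2 (H × K) →ₗ[ℂ] WithLp 2 (H × K))
    have hfact : pl.comp (Al.comp Jl) =
        ((((1 : H →L[ℂ] H) - adjoint T * T) : H →L[ℂ] H) : H →ₗ[ℂ] H) := by
      ext u
      have hQJ : Q (Jl u) = (WithLp.equiv 2 (H × K)).symm (T u, 0) := by
        rw [hQ' (Jl u)]
        have h1 : ((WithLp.equiv 2 (H × K)) (Jl u)).1 = u := rfl
        have h2 : ((WithLp.equiv 2 (H × K)) (Jl u)).2 = (0 : K) := rfl
        rw [h1, h2]
        simp
      have hAJ : (1 - adjoint Q * Q) (Jl u) = Jl u - (WithLp.equiv 2 (H × K)).symm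
          (adjoint T (T u), K.orthogonalProjectionOnto (Δ (T u))) := by
        have h3 : (1 - adjoint Q * Q) (Jl u) = Jl u - adjoint Q (Q (Jl u)) := by
          simp [ContinuousLinearMap.mul_apply, ContinuousLinearMap.sub_apply]
        rw [h3, hQJ, hQstar]
      show pl (Al (Jl u)) = ((1 : H →L[ℂ] H) - adjoint T * T) u
      have h4 : Al (Jl u) = (1 - adjoint Q * Q) (Jl u) := rfl
      rw [h4, hAJ, map_sub]
      have h5 : pl (Jl u) = u := rfl
      have h6 : pl ((WithLp.equiv 2 (H × K)).symm
          (adjoint T (T u), K.orthogonalProjectionOnto (Δ (T u)))) = adjoint T (T u) := rfl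
      rw [h5, h6]
      simp [ContinuousLinearMap.mul_apply, ContinuousLinearMap.sub_apply]
    have h1 := LinearMap.rank_comp_le_right (Al.comp Jl) pl
    have h2 := LinearMap.rank_comp_le_left Jl Al
    rw [hfact] at h1
    have h3 := le_trans h1 h2
    have e1 : LinearMap.range ((((1 : H →L[ℂ] H) - adjoint T * T) : H →L[ℂ] H) : H →ₗ[ℂ] H)
        = LinearMap.range ((1 : H →L[ℂ] H) - adjoint T * T).toLinearMap := by
      ext y
      simp [LinearMap.mem_range]
    have e2 : LinearMap.range Al = LinearMap.range (1 - adjoint Q * Q).toLinearMap := by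
      ext y
      simp [Al, LinearMap.mem_range]
    rw [LinearMap.rank, LinearMap.rank, e1, e2] at h3
    exact h3
  exact le_antisymm hle hge

theorem Q_kernel_defect_rank {H : Type*} [NormedAddCommGroup H]
    [InnerProductSpace ℂ H] [CompleteSpace H]
    (T : H →L[ℂ] H) (hT : ‖T‖ ≤ 1)
    (Δ : H →L[ℂ] H) (hΔpos : 0 ≤ Δ)
    (hΔsq : Δ * Δ = (1 : H →L[ℂ] H) - T * adjoint T)
    (Q : WithLp 2 (H × ((LinearMap.range ((1 : H →L[ℂ] H) - T * adjoint T).toLinearMap).topologicalClosure : Submodule ℂ H)) →L[ℂ]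
         WithLp 2 (H × ((LinearMap.range ((1 : H →L[ℂ] H) - T * adjoint T).toLinearMap).topologicalClosure : Submodule ℂ H)))
    (hQ : ∀ x, WithLp.equiv 2 _ (Q x) =
      (T ((WithLp.equiv 2 _) x).1 + Δ (((WithLp.equiv 2 _) x).2 : H), 0)) :
    Module.rank ℂ (LinearMap.range (1 - adjoint Q * Q).toLinearMap) =
      Module.rank ℂ (LinearMap.range ((1 : H →L[ℂ] H) - adjoint T * T).toLinearMap) := by
  haveI : CompleteSpace
      ((LinearMap.range ((1 : H →L[ℂ] H) - T * adjoint T).toLinearMap).topologicalClosure : Submodule ℂ H) :=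
    (Submodule.isClosed_topologicalClosure _).completeSpace_coe
  have hΔadj : adjoint Δ = Δ := by
    have h := IsSelfAdjoint.of_nonneg hΔpos
    rwa [isSelfAdjoint_iff, star_eq_adjoint] at h
  have hΔsq' : ∀ v : H, Δ (Δ v) = v - T (adjoint T v) := by
    intro v
    have h := congrFun (congrArg DFunLike.coe hΔsq) v
    simpa [ContinuousLinearMap.mul_apply] using h
  have hrange : ∀ v : H, v - T (adjoint T v) ∈
      (LinearMap.range ((1 : H →L[ℂ] H) - T * adjoint T).toLinearMap).topologicalClosure := by
    intro v
    apply Submodule.le_topologicalClosure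
    exact ⟨v, by simp [ContinuousLinearMap.mul_apply]⟩
  have hKinj : ∀ v : H,
      v ∈ (LinearMap.range ((1 : H →L[ℂ] H) - T * adjoint T).toLinearMap).topologicalClosure →
      Δ v = 0 → v = 0 := by
    intro v hvK hΔv
    have hsub : (LinearMap.range ((1 : H →L[ℂ] H) - T * adjoint T).toLinearMap).topologicalClosure ≤
        LinearMap.ker (innerSL ℂ v).toLinearMap := by
      apply Submodule.topologicalClosure_minimal
      · rintro w ⟨y, rfl⟩
        have hy : ((1 : H →L[ℂ] H) - T * adjoint T) y = Δ (Δ y) := by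
          rw [hΔsq']
          simp [ContinuousLinearMap.mul_apply]
        simp only [LinearMap.mem_ker]
        show (inner ℂ v (((1 : H →L[ℂ] H) - T * adjoint T) y) : ℂ) = 0
        rw [hy, show Δ (Δ y) = adjoint Δ (Δ y) by rw [hΔadj],
          ContinuousLinearMap.adjoint_inner_right, hΔv, inner_zero_left]
      · exact ContinuousLinearMap.isClosed_ker _
    have h0 : (inner ℂ v v : ℂ) = 0 := hsub hvK
    exact inner_self_eq_zero.mp h0
  exact Q_aux T Δ _ hΔadj hΔsq' hrange hKinj Q hQ
end

section
/- Let U be unitary on K, and let L, L′ be wandering subspaces for U with L finite-dimensional. If M(L′) = K (the iterates UⁿL′ span all of K), then dim L ≤ dim L′. -/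
open ContinuousLinearMap
open scoped InnerProductSpace

theorem wandering_dim_le {K : Type*} [NormedAddCommGroup K]
    [InnerProductSpace ℂ K] [CompleteSpace K]
    (U : unitary (K →L[ℂ] K)) (L L' : Submodule ℂ K)
    (hLfin : FiniteDimensional ℂ L)
    (hLwander : ∀ i j : ℤ, i ≠ j →
      ∀ x ∈ Submodule.map (((U ^ i : unitary (K →L[ℂ] K)) : K →L[ℂ] K) : K →ₗ[ℂ] K) L,
      ∀ y ∈ Submodule.map (((U ^ j : unitary (K →L[ℂ] K)) : K →L[ℂ] K) : K →ₗ[ℂ] K) L,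
        ⟪x, y⟫_ℂ = 0)
    (hL'wander : ∀ i j : ℤ, i ≠ j →
      ∀ x ∈ Submodule.map (((U ^ i : unitary (K →L[ℂ] K)) : K →L[ℂ] K) : K →ₗ[ℂ] K) L',
      ∀ y ∈ Submodule.map (((U ^ j : unitary (K →L[ℂ] K)) : K →L[ℂ] K) : K →ₗ[ℂ] K) L',
        ⟪x, y⟫_ℂ = 0)
    (hspan : (⨆ n : ℤ, Submodule.map (((U ^ n : unitary (K →L[ℂ] K)) : K →L[ℂ] K) : K →ₗ[ℂ] K) L').topologicalClosure = ⊤) :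
    Module.rank ℂ L ≤ Module.rank ℂ L' := by
  classical
  by_cases hL'fin : FiniteDimensional ℂ L'
  swap
  · have h1 : Module.rank ℂ L < Cardinal.aleph0 := Module.rank_lt_aleph0 ℂ L
    have h2 : Cardinal.aleph0 ≤ Module.rank ℂ L' := by
      by_contra h
      push_neg at h
      exact hL'fin (Module.rank_lt_aleph0_iff.mp h)
    exact h1.le.trans h2
  set Uop : ℤ → K →L[ℂ] K := fun n => ((U ^ n : unitary (K →L[ℂ] K)) : K →L[ℂ] K) with hUop
  have hinner : ∀ (n : ℤ) (x y : K), ⟪Uop n x, Uop n y⟫_ℂ = ⟪x, y⟫_ℂ := fun n x y =>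
    Unitary.inner_map_map (U ^ n) x y
  have hcomp : ∀ (a b : ℤ) (x : K), Uop a (Uop b x) = Uop (a + b) x := by
    intro a b x
    have h : (U ^ a) * (U ^ b) = U ^ (a + b) := (zpow_add U a b).symm
    simp only [hUop, ← h]
    rfl
  have hzero : ∀ x : K, Uop 0 x = x := by
    intro x; simp only [hUop, zpow_zero]; rfl
  set m := Module.finrank ℂ L with hm
  set k := Module.finrank ℂ L' with hk
  set bL := stdOrthonormalBasis ℂ L with hbL
  set bL' := stdOrthonormalBasis ℂ L' with hbL'
  set e : Fin m → K := fun i => (bL i : K) with he_def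
  set f : Fin k → K := fun j => (bL' j : K) with hf_def
  have he : Orthonormal ℂ e := by
    rw [orthonormal_iff_ite]
    intro i j
    have h := bL.orthonormal
    rw [orthonormal_iff_ite] at h
    simpa [he_def, ← Submodule.coe_inner] using h i j
  have hf : Orthonormal ℂ f := by
    rw [orthonormal_iff_ite]
    intro i j
    have h := bL'.orthonormal
    rw [orthonormal_iff_ite] at h
    simpa [hf_def, ← Submodule.coe_inner] using h i j
  have heL : ∀ i, e i ∈ L := fun i => (bL i).2
  have hfL' : ∀ j, f j ∈ L' := fun j => (bL' j).2
  -- the two families of translates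
  set v : ℤ × Fin k → K := fun p => Uop p.1 (f p.2) with hv_def
  set w : ℤ × Fin m → K := fun q => Uop q.1 (e q.2) with hw_def
  -- orthonormality of translated families
  have hvon : Orthonormal ℂ v := by
    rw [orthonormal_iff_ite]
    rintro ⟨n, j⟩ ⟨n', j'⟩
    by_cases hn : n = n'
    · subst hn
      by_cases hj : j = j'
      · subst hj; simp only [if_pos rfl]
        rw [hv_def]; dsimp only
        rw [hinner]
        have := hf.1 j
        rw [@inner_self_eq_norm_sq_to_K ℂ] at *
        rw [this]; norm_num
      · have : (n, j) ≠ (n, j') := by simp [hj]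
        rw [if_neg this, hv_def]; dsimp only
        rw [hinner]
        exact hf.2 hj
    · have : (n, j) ≠ (n', j') := by simp [hn]
      rw [if_neg this]
      refine hL'wander n n' hn _ ?_ _ ?_
      · exact ⟨f j, hfL' j, rfl⟩
      · exact ⟨f j', hfL' j', rfl⟩
  have hwon : Orthonormal ℂ w := by
    rw [orthonormal_iff_ite]
    rintro ⟨n, i⟩ ⟨n', i'⟩
    by_cases hn : n = n'
    · subst hn
      by_cases hi : i = i'
      · subst hi; simp only [if_pos rfl]
        rw [hw_def]; dsimp only
        rw [hinner]
        have := he.1 i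
        rw [@inner_self_eq_norm_sq_to_K ℂ] at *
        rw [this]; norm_num
      · have : (n, i) ≠ (n, i') := by simp [hi]
        rw [if_neg this, hw_def]; dsimp only
        rw [hinner]
        exact he.2 hi
    · have : (n, i) ≠ (n', i') := by simp [hn]
      rw [if_neg this]
      refine hLwander n n' hn _ ?_ _ ?_
      · exact ⟨e i, heL i, rfl⟩
      · exact ⟨e i', heL i', rfl⟩
  -- span of f is L'
  have hspanf : Submodule.span ℂ (Set.range f) = L' := by
    have h1 : Submodule.span ℂ (Set.range (bL' : Fin k → L')) = ⊤ := by
      rw [← bL'.coe_toBasis]; exact bL'.toBasis.span_eq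
    have h2 : L' = Submodule.map L'.subtype ⊤ := by
      rw [Submodule.map_top, Submodule.range_subtype]
    rw [h2, ← h1, Submodule.map_span]
    congr 1
    rw [← Set.range_comp]
    rfl
  -- span of range v is the iSup
  have hspanv : Submodule.span ℂ (Set.range v) =
      ⨆ n : ℤ, Submodule.map (Uop n : K →ₗ[ℂ] K) L' := by
    apply le_antisymm
    · rw [Submodule.span_le]
      rintro x ⟨⟨n, j⟩, rfl⟩
      exact Submodule.mem_iSup_of_mem n ⟨f j, hfL' j, rfl⟩
    · refine iSup_le fun n => ?_
      rw [← hspanf, Submodule.map_span, Submodule.span_le]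
      rintro x ⟨y, ⟨j, rfl⟩, rfl⟩
      exact Submodule.subset_span ⟨(n, j), rfl⟩
  -- Hilbert basis
  have hdense : ⊤ ≤ (Submodule.span ℂ (Set.range v)).topologicalClosure := by
    rw [hspanv, hspan]
  set hb : HilbertBasis (ℤ × Fin k) ℂ K := HilbertBasis.mk hvon hdense with hhb
  have hbcoe : ⇑hb = v := HilbertBasis.coe_mk hvon hdense
  -- Parseval (real form)
  have parseval : ∀ x : K,
      HasSum (fun p : ℤ × Fin k => ‖⟪v p, x⟫_ℂ‖ ^ 2) (‖x‖ ^ 2) := by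
    intro x
    have h := hb.hasSum_inner_mul_inner x x
    rw [hbcoe] at h
    have h2 : ∀ p : ℤ × Fin k,
        ⟪x, v p⟫_ℂ * ⟪v p, x⟫_ℂ = ((‖⟪v p, x⟫_ℂ‖ ^ 2 : ℝ) : ℂ) := by
      intro p
      rw [← inner_conj_symm (v p) x, RCLike.mul_conj, RCLike.norm_conj]
      norm_cast
    have h3 : ⟪x, x⟫_ℂ = ((‖x‖ ^ 2 : ℝ) : ℂ) := by
      rw [@inner_self_eq_norm_sq_to_K ℂ]; norm_num
    rw [h3] at h
    simp_rw [h2] at h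
    exact Complex.hasSum_ofReal.mp h
  -- lift everything to ℝ≥0∞
  set g : Fin m → ℤ × Fin k → ENNReal :=
    fun i p => ENNReal.ofReal (‖⟪v p, e i⟫_ℂ‖ ^ 2) with hg_def
  have hParse : ∀ i, (∑' p, g i p) = 1 := by
    intro i
    have hs := (parseval (e i)).summable
    rw [hg_def]
    rw [← ENNReal.ofReal_tsum_of_nonneg (fun p => by positivity) hs]
    rw [(parseval (e i)).tsum_eq, he.1 i]
    norm_num
  have hBessel : ∀ j : Fin k,
      (∑' q : ℤ × Fin m, ENNReal.ofReal (‖⟪w q, f j⟫_ℂ‖ ^ 2)) ≤ 1 := by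
    intro j
    rw [← ENNReal.ofReal_tsum_of_nonneg (fun q => by positivity)
      (hwon.inner_products_summable (f j))]
    calc ENNReal.ofReal (∑' q : ℤ × Fin m, ‖⟪w q, f j⟫_ℂ‖ ^ 2)
        ≤ ENNReal.ofReal (‖f j‖ ^ 2) :=
          ENNReal.ofReal_le_ofReal (hwon.tsum_inner_products_le (f j))
      _ = 1 := by rw [hf.1 j]; norm_num
  -- key norm identity
  have hswap : ∀ (n : ℤ) (j : Fin k) (i : Fin m),
      ‖⟪v (n, j), e i⟫_ℂ‖ = ‖⟪w (-n, i), f j⟫_ℂ‖ := by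
    intro n j i
    have h1 : e i = Uop n (Uop (-n) (e i)) := by
      rw [hcomp, add_neg_cancel, hzero]
    calc ‖⟪v (n, j), e i⟫_ℂ‖ = ‖⟪Uop n (f j), Uop n (Uop (-n) (e i))⟫_ℂ‖ := by
          rw [← h1]
      _ = ‖⟪f j, Uop (-n) (e i)⟫_ℂ‖ := by rw [hinner]
      _ = ‖⟪w (-n, i), f j⟫_ℂ‖ := norm_inner_symm _ _
  -- the double counting
  have key : (m : ENNReal) ≤ (k : ENNReal) := by
    calc (m : ENNReal) = ∑' _ : Fin m, (1 : ENNReal) := by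
          simp [tsum_fintype]
      _ = ∑' i : Fin m, ∑' p : ℤ × Fin k, g i p :=
          tsum_congr fun i => (hParse i).symm
      _ = ∑' i : Fin m, ∑' n : ℤ, ∑' j : Fin k, g i (n, j) := by
          congr 1; funext i; exact ENNReal.tsum_prod'
      _ = ∑' n : ℤ, ∑' i : Fin m, ∑' j : Fin k, g i (n, j) := ENNReal.tsum_comm
      _ = ∑' n : ℤ, ∑' j : Fin k, ∑' i : Fin m, g i (n, j) := by
          congr 1; funext n; exact ENNReal.tsum_comm
      _ = ∑' j : Fin k, ∑' n : ℤ, ∑' i : Fin m, g i (n, j) := ENNReal.tsum_comm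
      _ = ∑' j : Fin k, ∑' n : ℤ, ∑' i : Fin m,
            ENNReal.ofReal (‖⟪w (-n, i), f j⟫_ℂ‖ ^ 2) := by
          simp_rw [hg_def, hswap]
      _ = ∑' j : Fin k, ∑' n : ℤ, ∑' i : Fin m,
            ENNReal.ofReal (‖⟪w (n, i), f j⟫_ℂ‖ ^ 2) := by
          refine tsum_congr fun j => ?_
          exact (Equiv.neg ℤ).tsum_eq
            (fun n => ∑' i : Fin m, ENNReal.ofReal (‖⟪w (n, i), f j⟫_ℂ‖ ^ 2))
      _ = ∑' j : Fin k, ∑' q : ℤ × Fin m,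
            ENNReal.ofReal (‖⟪w q, f j⟫_ℂ‖ ^ 2) := by
          refine tsum_congr fun j => ?_
          exact (ENNReal.tsum_prod'
            (f := fun q : ℤ × Fin m => ENNReal.ofReal (‖⟪w q, f j⟫_ℂ‖ ^ 2))).symm
      _ ≤ ∑' _ : Fin k, (1 : ENNReal) := ENNReal.tsum_le_tsum hBessel
      _ = (k : ENNReal) := by simp [tsum_fintype]
  have hmk : m ≤ k := by exact_mod_cast key
  rw [← Module.finrank_eq_rank ℂ L, ← Module.finrank_eq_rank ℂ L']
  exact_mod_cast hmk
end

section
/- If T is a bounded operator on a Hilbert space such that 1 − T*T has finite rank, then T has closed range. -/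
open ContinuousLinearMap

/-- A closed submodule plus a finite-dimensional submodule is closed. -/
lemma isClosed_sup_of_fd {E : Type*} [NormedAddCommGroup E] [NormedSpace ℂ E]
    (F W : Submodule ℂ E) (hF : IsClosed (F : Set E)) [FiniteDimensional ℂ W] :
    IsClosed ((F ⊔ W : Submodule ℂ E) : Set E) := by
  haveI : IsClosed (F : Set E) := hF
  let π : E →L[ℂ] E ⧸ F := F.mkQ.mkContinuous 1 (by
    intro m
    simpa using Submodule.Quotient.norm_mk_le F m)
  have hπ : (π : E →ₗ[ℂ] E ⧸ F) = F.mkQ := rfl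
  have hW' : FiniteDimensional ℂ (Submodule.map F.mkQ W) :=
    Module.Finite.map W F.mkQ
  have hclosed : IsClosed ((Submodule.map F.mkQ W : Submodule ℂ (E ⧸ F)) : Set (E ⧸ F)) :=
    Submodule.closed_of_finiteDimensional _
  have key : ((F ⊔ W : Submodule ℂ E) : Set E)
      = π ⁻¹' ((Submodule.map F.mkQ W : Submodule ℂ (E ⧸ F)) : Set (E ⧸ F)) := by
    have : Submodule.comap F.mkQ (Submodule.map F.mkQ W) = W ⊔ F := by
      rw [Submodule.comap_map_eq, Submodule.ker_mkQ]
    ext x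
    simp only [Set.mem_preimage, SetLike.mem_coe]
    constructor
    · intro hx
      have : x ∈ Submodule.comap F.mkQ (Submodule.map F.mkQ W) := by
        rw [this, sup_comm]; exact hx
      exact this
    · intro hx
      have : x ∈ Submodule.comap F.mkQ (Submodule.map F.mkQ W) := hx
      rw [Submodule.comap_map_eq, Submodule.ker_mkQ, sup_comm] at this
      exact this
  rw [key]
  exact hclosed.preimage π.continuous

theorem closed_range_of_finite_defect {H : Type*} [NormedAddCommGroup H]
    [InnerProductSpace ℂ H] [CompleteSpace H]
    (T : H →L[ℂ] H)
    (hfin : FiniteDimensional ℂ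
      (LinearMap.range (((1 : H →L[ℂ] H) - adjoint T * T : H →L[ℂ] H) : H →ₗ[ℂ] H))) :
    IsClosed (LinearMap.range (T : H →ₗ[ℂ] H) : Set H) := by
  set K : H →L[ℂ] H := (1 : H →L[ℂ] H) - adjoint T * T with hKdef
  have hKsa : ContinuousLinearMap.adjoint K = K := by
    rw [← ContinuousLinearMap.star_eq_adjoint]
    simp [hKdef, star_sub, star_one, star_mul, ContinuousLinearMap.star_eq_adjoint,
      ContinuousLinearMap.adjoint_adjoint]
  set N : Submodule ℂ H := LinearMap.range (K : H →ₗ[ℂ] H) with hNdef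
  haveI : FiniteDimensional ℂ N := hfin
  -- On Nᗮ, K vanishes
  have hker : ∀ x ∈ Nᗮ, K x = 0 := by
    intro x hx
    have h0 : ∀ y : H, @inner ℂ _ _ (K x) y = 0 := by
      intro y
      have h1 : @inner ℂ _ _ (K y) x = 0 := hx (K y) ⟨y, rfl⟩
      calc @inner ℂ _ _ (K x) y
          = @inner ℂ _ _ ((ContinuousLinearMap.adjoint K) x) y := by rw [hKsa]
        _ = @inner ℂ _ _ x (K y) := ContinuousLinearMap.adjoint_inner_left K y x
        _ = starRingEnd ℂ (@inner ℂ _ _ (K y) x) := (inner_conj_symm _ _).symm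
        _ = 0 := by rw [h1, map_zero]
    have := h0 (K x)
    rwa [inner_self_eq_zero] at this
  -- T is isometric on Nᗮ
  have hiso : ∀ x ∈ Nᗮ, ‖T x‖ = ‖x‖ := by
    intro x hx
    have hK0 : K x = 0 := hker x hx
    have hTT : (ContinuousLinearMap.adjoint T) (T x) = x := by
      have : x - (ContinuousLinearMap.adjoint T) (T x) = 0 := by
        simpa [hKdef, sub_eq_zero] using hK0
      rw [sub_eq_zero] at this
      exact this.symm
    have h2 := ContinuousLinearMap.adjoint_inner_left T x (T x)
    rw [hTT] at h2
    rw [@inner_self_eq_norm_sq_to_K ℂ, @inner_self_eq_norm_sq_to_K ℂ] at h2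
    have h3 : (‖x‖ : ℝ) ^ 2 = ‖T x‖ ^ 2 := by exact_mod_cast h2
    nlinarith [norm_nonneg (T x), norm_nonneg x]
  -- the restriction of T to Nᗮ
  set S : Nᗮ →L[ℂ] H := T.comp (Nᗮ.subtypeL) with hSdef
  have hanti : AntilipschitzWith 1 S := by
    refine AntilipschitzWith.of_le_mul_dist fun x y => ?_
    rw [dist_eq_norm, dist_eq_norm, ← map_sub]
    have : S (x - y) = T ((x : H) - (y : H)) := by simp [hSdef]
    rw [this, hiso _ (Nᗮ.sub_mem x.2 y.2)]
    simp [Submodule.coe_sub]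
  have hSclosed : IsClosed (LinearMap.range (S : Nᗮ →ₗ[ℂ] H) : Set H) := by
    have h := hanti.isClosed_range S.uniformContinuous
    have heq : (LinearMap.range (S : Nᗮ →ₗ[ℂ] H) : Set H) = Set.range S := by
      ext z; simp [LinearMap.mem_range, Set.mem_range]
    rwa [heq]
  -- range S = map T Nᗮ
  have hrangeS : LinearMap.range (S : Nᗮ →ₗ[ℂ] H) = Submodule.map (T : H →ₗ[ℂ] H) Nᗮ := by
    ext z
    constructor
    · rintro ⟨x, rfl⟩
      exact ⟨x, x.2, rfl⟩
    · rintro ⟨x, hx, rfl⟩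
      exact ⟨⟨x, hx⟩, rfl⟩
  -- decompose range T
  have hNN : Nᗮᗮ = N := Submodule.orthogonal_orthogonal N
  have htop : Nᗮ ⊔ Nᗮᗮ = ⊤ := Submodule.sup_orthogonal_of_hasOrthogonalProjection
  have hrangeT : LinearMap.range (T : H →ₗ[ℂ] H) = Submodule.map (T : H →ₗ[ℂ] H) Nᗮ ⊔ Submodule.map (T : H →ₗ[ℂ] H) N := by
    have hsup : Nᗮ ⊔ N = ⊤ := by rwa [hNN] at htop
    rw [← Submodule.map_sup, hsup, Submodule.map_top]
  haveI : FiniteDimensional ℂ (Submodule.map (T : H →ₗ[ℂ] H) N) := Module.Finite.map N (T : H →ₗ[ℂ] H)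
  have := isClosed_sup_of_fd (Submodule.map (T : H →ₗ[ℂ] H) Nᗮ) (Submodule.map (T : H →ₗ[ℂ] H) N)
    (by rw [← hrangeS]; exact hSclosed)
  rw [hrangeT]
  exact this
end
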